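/- Let γ ≥ 2 be a real number. Then for all real numbers n ≥ 0 and ρ ≥ 0, |n − ρ|^γ ≤ p(n|ρ). -/

import Mathlib

/-- The relative pressure functional `p(n|ρ) = n^γ − ρ^γ − γ ρ^{γ−1}(n − ρ)`. -/
noncomputable def relPressure (γ n ρ : ℝ) : ℝ :=
  n ^ γ - ρ ^ γ - γ * ρ ^ (γ - 1) * (n - ρ)

private lemma superadd {p a b : ℝ} (hp : 1 ≤ p) (ha : 0 ≤ a) (hb : 0 ≤ b) :
    a ^ p + b ^ p ≤ (a + b) ^ p := by
  have h := NNReal.coe_le_coe.2 (NNReal.add_rpow_le_rpow_add a.toNNReal b.toNNReal hp)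
  simpa [NNReal.coe_rpow, Real.coe_toNNReal _ ha, Real.coe_toNNReal _ hb,
    Real.coe_toNNReal _ (add_nonneg ha hb)] using h

theorem abs_pow_le_relPressure (γ : ℝ) (hγ : 2 ≤ γ) :
    ∀ n ρ : ℝ, 0 ≤ n → 0 ≤ ρ → |n - ρ| ^ γ ≤ relPressure γ n ρ := by
  intro n ρ hn hρ
  have hγ1 : 1 ≤ γ := by linarith
  have hγ1' : 1 ≤ γ - 1 := by linarith
  have hcont : Continuous fun x : ℝ => x ^ γ :=
    continuous_iff_continuousAt.mpr fun x =>
      Real.continuousAt_rpow_const x γ (Or.inr (by linarith))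
  rcases le_total ρ n with h | h
  · -- n ≥ ρ
    rw [abs_of_nonneg (by linarith)]
    set F : ℝ → ℝ := fun x => x ^ γ - ρ ^ γ - γ * ρ ^ (γ - 1) * (x - ρ) - (x - ρ) ^ γ with hF
    have hd : ∀ x : ℝ, HasDerivAt F (γ * x ^ (γ - 1) - γ * ρ ^ (γ - 1)
        - γ * (x - ρ) ^ (γ - 1)) x := by
      intro x
      have h1 : HasDerivAt (fun x : ℝ => x ^ γ) (γ * x ^ (γ - 1)) x :=
        Real.hasDerivAt_rpow_const (Or.inr hγ1)
      have h2 : HasDerivAt (fun x : ℝ => (x - ρ) ^ γ) (1 * γ * (x - ρ) ^ (γ - 1)) x :=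
        ((hasDerivAt_id x).sub_const ρ).rpow_const (Or.inr hγ1)
      have h3 : HasDerivAt (fun x : ℝ => γ * ρ ^ (γ - 1) * (x - ρ))
          (γ * ρ ^ (γ - 1) * 1) x :=
        ((hasDerivAt_id x).sub_const ρ).const_mul _
      have := ((h1.sub_const (ρ ^ γ)).sub h3).sub h2
      exact this.congr_deriv (by ring)
    have hmono : MonotoneOn F (Set.Ici ρ) := by
      apply monotoneOn_of_deriv_nonneg (convex_Ici ρ)
      · exact (((hcont.sub continuous_const).sub
          (continuous_const.mul (continuous_id.sub continuous_const))).sub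
          (hcont.comp (continuous_id.sub continuous_const))).continuousOn
      · exact fun x _ => (hd x).differentiableAt.differentiableWithinAt
      · intro x hx
        rw [interior_Ici] at hx
        rw [(hd x).deriv]
        have hx0 : 0 ≤ x - ρ := by simp at hx; linarith
        have := superadd hγ1' hρ hx0
        rw [show ρ + (x - ρ) = x by ring] at this
        nlinarith [this]
    have hρmem : ρ ∈ Set.Ici ρ := Set.self_mem_Ici
    have hnmem : n ∈ Set.Ici ρ := h
    have := hmono hρmem hnmem h
    have hFρ : F ρ = 0 := by
      simp [hF, Real.zero_rpow (by linarith : γ ≠ 0)]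
    rw [hFρ] at this
    unfold relPressure
    simp only [hF] at this
    linarith
  · -- n ≤ ρ
    rw [abs_of_nonpos (by linarith), neg_sub]
    set G : ℝ → ℝ := fun x => x ^ γ - ρ ^ γ - γ * ρ ^ (γ - 1) * (x - ρ) - (ρ - x) ^ γ with hG
    have hd : ∀ x : ℝ, HasDerivAt G (γ * x ^ (γ - 1) - γ * ρ ^ (γ - 1)
        + γ * (ρ - x) ^ (γ - 1)) x := by
      intro x
      have h1 : HasDerivAt (fun x : ℝ => x ^ γ) (γ * x ^ (γ - 1)) x :=
        Real.hasDerivAt_rpow_const (Or.inr hγ1)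
      have h2 : HasDerivAt (fun x : ℝ => (ρ - x) ^ γ) ((-1) * γ * (ρ - x) ^ (γ - 1)) x :=
        ((hasDerivAt_id x).const_sub ρ).rpow_const (Or.inr hγ1)
      have h3 : HasDerivAt (fun x : ℝ => γ * ρ ^ (γ - 1) * (x - ρ))
          (γ * ρ ^ (γ - 1) * 1) x :=
        ((hasDerivAt_id x).sub_const ρ).const_mul _
      have := ((h1.sub_const (ρ ^ γ)).sub h3).sub h2
      exact this.congr_deriv (by ring)
    have hanti : AntitoneOn G (Set.Icc 0 ρ) := by
      apply antitoneOn_of_deriv_nonpos (convex_Icc 0 ρ)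
      · exact (((hcont.sub continuous_const).sub
          (continuous_const.mul (continuous_id.sub continuous_const))).sub
          (hcont.comp (continuous_const.sub continuous_id))).continuousOn
      · exact fun x _ => (hd x).differentiableAt.differentiableWithinAt
      · intro x hx
        rw [interior_Icc] at hx
        obtain ⟨hx0, hxρ⟩ := hx
        rw [(hd x).deriv]
        have := superadd hγ1' (le_of_lt hx0) (by linarith : (0:ℝ) ≤ ρ - x)
        rw [show x + (ρ - x) = ρ by ring] at this
        nlinarith [this]
    have := hanti (Set.mem_Icc.2 ⟨hn, h⟩) (Set.mem_Icc.2 ⟨hρ, le_refl ρ⟩) h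
    have hGρ : G ρ = 0 := by
      simp [hG, Real.zero_rpow (by linarith : γ ≠ 0)]
    rw [hGρ] at this
    unfold relPressure
    simp only [hG] at this
    linarith
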